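/- Let $F, G$ be CDFs on $[a,b]$ and $\beta > 0$. Then $\left|\frac{1}{\beta}\log\int_a^b e^{\beta x}dF(x) - \frac{1}{\beta}\log\int_a^b e^{\beta x}dG(x)\right| \le \frac{e^{\beta(b-a)} - 1}{\beta}\,\|F - G\|_\infty$, i.e., the entropic risk measure is globally Lipschitz in the supremum distance with constant $(e^{\beta(b-a)}-1)/\beta$. -/

import Mathlib

open MeasureTheory

lemma aux_exp_int (a x β : ℝ) (hax : a ≤ x) :
    ∫ t in Set.Ioo a x, β * Real.exp (β * t) = Real.exp (β * x) - Real.exp (β * a) := by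
  rw [← integral_Ioc_eq_integral_Ioo, ← intervalIntegral.integral_of_le hax]
  have : ∀ t ∈ Set.uIcc a x, HasDerivAt (fun t => Real.exp (β * t)) (β * Real.exp (β * t)) t := by
    intro t _
    have h1 : HasDerivAt (fun t : ℝ => β * t) β t := by
      simpa using (hasDerivAt_id t).const_mul β
    simpa [mul_comm] using h1.exp
  rw [intervalIntegral.integral_eq_sub_of_hasDerivAt this
    (by apply Continuous.intervalIntegrable; continuity)]

lemma aux_rep (a b β : ℝ) (hab : a ≤ b) (hβ : 0 < β)
    (μ : Measure ℝ) [IsProbabilityMeasure μ] (hμ : μ (Set.Icc a b) = 1) :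
    ∫ x, Real.exp (β * x) ∂μ =
      Real.exp (β * a) + ∫ t in Set.Ioc a b, (β * Real.exp (β * t)) * (μ (Set.Ioi t)).toReal := by
  set ρ : Measure ℝ := volume.restrict (Set.Ioc a b) with hρ
  set f : ℝ → ℝ → ℝ := fun x t => if t < x then β * Real.exp (β * t) else 0 with hf
  have hmeas : Measurable (Function.uncurry f) := by
    apply Measurable.ite (measurableSet_lt measurable_snd measurable_fst)
    · exact (measurable_const.mul ((measurable_snd.const_mul β).exp))
    · exact measurable_const
  have haeprod : ∀ᵐ p : ℝ × ℝ ∂(μ.prod ρ), p.2 ∈ Set.Ioc a b := by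
    have : μ.prod ρ = (μ.prod volume).restrict (Set.univ ×ˢ Set.Ioc a b) := by
      rw [hρ, ← Measure.prod_restrict, Measure.restrict_univ]
    rw [this]
    filter_upwards [ae_restrict_mem (MeasurableSet.univ.prod measurableSet_Ioc)] with p hp
    exact hp.2
  have hint : Integrable (Function.uncurry f) (μ.prod ρ) := by
    apply Integrable.mono' (g := fun _ => β * Real.exp (β * b)) (integrable_const _)
      hmeas.aestronglyMeasurable
    filter_upwards [haeprod] with p hp
    simp only [Function.uncurry, hf]
    split
    · rw [Real.norm_eq_abs, abs_of_nonneg (by positivity)]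
      exact mul_le_mul_of_nonneg_left (Real.exp_le_exp.2
        (mul_le_mul_of_nonneg_left hp.2 hβ.le)) hβ.le
    · simpa using by positivity
  have haeμ : ∀ᵐ x ∂μ, x ∈ Set.Icc a b := by
    have h0 : μ (Set.Icc a b)ᶜ = 0 := by
      rw [measure_compl measurableSet_Icc (measure_ne_top μ _), hμ, measure_univ, tsub_self]
    rw [ae_iff]
    exact h0
  have step1 : ∫ x, Real.exp (β * x) ∂μ
      = ∫ x, (Real.exp (β * a) + ∫ t, f x t ∂ρ) ∂μ := by
    apply integral_congr_ae
    filter_upwards [haeμ] with x hx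
    have hfx : ∀ t, f x t = (Set.Iio x).indicator (fun t => β * Real.exp (β * t)) t := by
      intro t
      simp only [hf, Set.indicator, Set.mem_Iio]
    have : ∫ t, f x t ∂ρ = ∫ t in Set.Ioo a x, β * Real.exp (β * t) := by
      rw [show (fun t => f x t) = (Set.Iio x).indicator (fun t => β * Real.exp (β * t)) from
        funext hfx]
      rw [hρ, integral_indicator measurableSet_Iio,
        Measure.restrict_restrict measurableSet_Iio]
      have hset : Set.Iio x ∩ Set.Ioc a b = Set.Ioo a x := by
        ext t
        simp only [Set.mem_inter_iff, Set.mem_Iio, Set.mem_Ioc, Set.mem_Ioo]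
        constructor
        · rintro ⟨h1, h2, _⟩; exact ⟨h2, h1⟩
        · rintro ⟨h1, h2⟩; exact ⟨h2, h1, le_trans h2.le hx.2⟩
      rw [hset]
    rw [this, aux_exp_int a x β hx.1]
    ring
  have hintmarg : Integrable (fun x => ∫ t, f x t ∂ρ) μ := hint.integral_prod_left
  rw [step1, integral_add (integrable_const _) hintmarg, integral_const, probReal_univ]
  simp only [ENNReal.toReal_one, one_smul]
  congr 1
  rw [integral_integral_swap hint]
  apply integral_congr_ae
  apply ae_of_all
  intro t
  show ∫ x, f x t ∂μ = β * Real.exp (β * t) * (μ (Set.Ioi t)).toReal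
  have : ∀ x, f x t = (Set.Ioi t).indicator (fun _ => β * Real.exp (β * t)) x := by
    intro x
    simp only [hf, Set.indicator, Set.mem_Ioi]
  rw [show (fun x => f x t) = (Set.Ioi t).indicator (fun _ => β * Real.exp (β * t)) from
    funext this]
  rw [integral_indicator_const _ measurableSet_Ioi, smul_eq_mul, mul_comm]
  rfl

lemma aux_ae (a b : ℝ) (μ : Measure ℝ) [IsProbabilityMeasure μ] (hμ : μ (Set.Icc a b) = 1) :
    ∀ᵐ x ∂μ, x ∈ Set.Icc a b := by
  have h0 : μ (Set.Icc a b)ᶜ = 0 := by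
    rw [measure_compl measurableSet_Icc (measure_ne_top μ _), hμ, measure_univ, tsub_self]
  rw [ae_iff]
  exact h0

lemma aux_log {c x y : ℝ} (hc : 0 < c) (hx : c ≤ x) (hy : c ≤ y) :
    |Real.log x - Real.log y| ≤ |x - y| / c := by
  have key : ∀ u v : ℝ, c ≤ u → c ≤ v → v ≤ u → Real.log u - Real.log v ≤ (u - v) / c := by
    intro u v hu hv huv
    have hv0 : 0 < v := lt_of_lt_of_le hc hv
    have hu0 : 0 < u := lt_of_lt_of_le hc hu
    rw [← Real.log_div hu0.ne' hv0.ne']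
    have h1 : Real.log (u / v) ≤ u / v - 1 := Real.log_le_sub_one_of_pos (by positivity)
    have h2 : u / v - 1 = (u - v) / v := by field_simp
    have h3 : (u - v) / v ≤ (u - v) / c := by gcongr
    linarith
  rcases le_total y x with h | h
  · rw [abs_of_nonneg (sub_nonneg.2 (Real.log_le_log (lt_of_lt_of_le hc hy) h)),
      abs_of_nonneg (by linarith)]
    exact key x y hx hy h
  · rw [abs_sub_comm, abs_sub_comm x y,
      abs_of_nonneg (sub_nonneg.2 (Real.log_le_log (lt_of_lt_of_le hc hx) h)),
      abs_of_nonneg (by linarith)]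
    exact key y x hy hx h

lemma aux_compl (t : ℝ) (μ : Measure ℝ) [IsProbabilityMeasure μ] :
    (μ (Set.Ioi t)).toReal = 1 - (μ (Set.Iic t)).toReal := by
  have h := measure_add_measure_compl (μ := μ) (s := Set.Iic t) measurableSet_Iic
  rw [Set.compl_Iic, measure_univ] at h
  have h1 : (μ (Set.Iic t)).toReal + (μ (Set.Ioi t)).toReal = 1 := by
    rw [← ENNReal.toReal_add (measure_ne_top _ _) (measure_ne_top _ _), h, ENNReal.toReal_one]
  linarith

theorem stmt_9 (a b β : ℝ) (hab : a < b) (hβ : 0 < β)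
    (μ ν : Measure ℝ) [IsProbabilityMeasure μ] [IsProbabilityMeasure ν]
    (hμ : μ (Set.Icc a b) = 1) (hν : ν (Set.Icc a b) = 1) :
    |(1 / β) * Real.log (∫ x, Real.exp (β * x) ∂μ) -
        (1 / β) * Real.log (∫ x, Real.exp (β * x) ∂ν)| ≤
      ((Real.exp (β * (b - a)) - 1) / β) *
        ⨆ x : ℝ, |(μ (Set.Iic x)).toReal - (ν (Set.Iic x)).toReal| := by
  set F : ℝ → ℝ := fun t => (μ (Set.Iic t)).toReal with hF
  set G : ℝ → ℝ := fun t => (ν (Set.Iic t)).toReal with hG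
  set M : ℝ := ⨆ x : ℝ, |F x - G x| with hMdef
  -- sup bounds
  have hbdd : BddAbove (Set.range fun x => |F x - G x|) := by
    refine ⟨2, ?_⟩
    rintro _ ⟨x, rfl⟩
    have h1 : |F x| ≤ 1 := by
      rw [abs_of_nonneg ENNReal.toReal_nonneg]
      exact ENNReal.toReal_le_of_le_ofReal one_pos.le (by simpa using prob_le_one)
    have h2 : |G x| ≤ 1 := by
      rw [abs_of_nonneg ENNReal.toReal_nonneg]
      exact ENNReal.toReal_le_of_le_ofReal one_pos.le (by simpa using prob_le_one)
    calc |F x - G x| ≤ |F x| + |G x| := abs_sub _ _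
    _ ≤ 2 := by linarith
  have hM : ∀ t, |F t - G t| ≤ M := fun t => le_ciSup hbdd t
  have hM0 : 0 ≤ M := (abs_nonneg _).trans (hM 0)
  -- integrability of exp
  have hexpmeas : Measurable fun x : ℝ => Real.exp (β * x) :=
    (measurable_id.const_mul β).exp
  have hintexp : ∀ (κ : Measure ℝ) [IsProbabilityMeasure κ], κ (Set.Icc a b) = 1 →
      Integrable (fun x => Real.exp (β * x)) κ := by
    intro κ _ hκ
    apply Integrable.mono' (g := fun _ => Real.exp (β * b)) (integrable_const _)
      hexpmeas.aestronglyMeasurable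
    filter_upwards [aux_ae a b κ hκ] with x hx
    rw [Real.norm_eq_abs, abs_of_pos (Real.exp_pos _)]
    exact Real.exp_le_exp.2 (mul_le_mul_of_nonneg_left hx.2 hβ.le)
  -- lower bounds
  have hlow : ∀ (κ : Measure ℝ) [IsProbabilityMeasure κ], κ (Set.Icc a b) = 1 →
      Real.exp (β * a) ≤ ∫ x, Real.exp (β * x) ∂κ := by
    intro κ _ hκ
    have := integral_mono_ae (integrable_const (Real.exp (β * a))) (hintexp κ hκ) ?_
    · simpa using this
    · filter_upwards [aux_ae a b κ hκ] with x hx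
      exact Real.exp_le_exp.2 (mul_le_mul_of_nonneg_left hx.1 hβ.le)
  -- integrability of t ↦ E t * (κ (Ioi t)).toReal on Ioc a b
  have hintE : ∀ (κ : Measure ℝ) [IsProbabilityMeasure κ],
      Integrable (fun t => (β * Real.exp (β * t)) * (κ (Set.Ioi t)).toReal)
        (volume.restrict (Set.Ioc a b)) := by
    intro κ _
    have hanti : Antitone fun t => (κ (Set.Ioi t)).toReal := by
      intro s t hst
      exact ENNReal.toReal_mono (measure_ne_top _ _) (measure_mono (Set.Ioi_subset_Ioi hst))
    apply Integrable.mono' (g := fun _ => β * Real.exp (β * b)) (integrable_const _)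
      (((hexpmeas.const_mul β).mul hanti.measurable).aestronglyMeasurable)
    filter_upwards [ae_restrict_mem measurableSet_Ioc] with t ht
    simp only [Pi.mul_apply]
    rw [Real.norm_eq_abs, abs_of_nonneg (by positivity)]
    have h1 : (κ (Set.Ioi t)).toReal ≤ 1 :=
      ENNReal.toReal_le_of_le_ofReal one_pos.le (by simpa using prob_le_one)
    calc β * Real.exp (β * t) * (κ (Set.Ioi t)).toReal ≤ β * Real.exp (β * t) * 1 := by
          apply mul_le_mul_of_nonneg_left h1 (by positivity)
    _ = β * Real.exp (β * t) := mul_one _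
    _ ≤ β * Real.exp (β * b) := by
          apply mul_le_mul_of_nonneg_left (Real.exp_le_exp.2
            (mul_le_mul_of_nonneg_left ht.2 hβ.le)) hβ.le
  -- difference bound
  have hdiff : |(∫ x, Real.exp (β * x) ∂μ) - ∫ x, Real.exp (β * x) ∂ν| ≤
      (Real.exp (β * b) - Real.exp (β * a)) * M := by
    rw [aux_rep a b β hab.le hβ μ hμ, aux_rep a b β hab.le hβ ν hν]
    have heq : (Real.exp (β * a) + ∫ t in Set.Ioc a b,
          (β * Real.exp (β * t)) * (μ (Set.Ioi t)).toReal) -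
        (Real.exp (β * a) + ∫ t in Set.Ioc a b,
          (β * Real.exp (β * t)) * (ν (Set.Ioi t)).toReal) =
        ∫ t in Set.Ioc a b, (β * Real.exp (β * t)) *
          ((μ (Set.Ioi t)).toReal - (ν (Set.Ioi t)).toReal) := by
      rw [add_sub_add_left_eq_sub, ← integral_sub (hintE μ) (hintE ν)]
      exact integral_congr_ae (ae_of_all _ fun t => by ring)
    rw [heq]
    rw [← Real.norm_eq_abs]
    have hb : ‖∫ t in Set.Ioc a b, (β * Real.exp (β * t)) *
        ((μ (Set.Ioi t)).toReal - (ν (Set.Ioi t)).toReal)‖ ≤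
        ∫ t in Set.Ioc a b, (β * Real.exp (β * t)) * M := by
      apply norm_integral_le_of_norm_le
      · refine (Integrable.mono' (g := fun _ => β * Real.exp (β * b) * M)
          (integrable_const _)
          (((hexpmeas.const_mul β).mul_const M).aestronglyMeasurable) ?_)
        filter_upwards [ae_restrict_mem measurableSet_Ioc] with t ht
        rw [Real.norm_eq_abs, abs_of_nonneg (by positivity)]
        gcongr
        exact ht.2
      · apply ae_of_all
        intro t
        rw [Real.norm_eq_abs, abs_mul, abs_of_nonneg (show (0:ℝ) ≤ β * Real.exp (β * t) by positivity)]
        gcongr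
        rw [aux_compl t μ, aux_compl t ν]
        have : (1 - F t) - (1 - G t) = -(F t - G t) := by ring
        rw [this, abs_neg]
        exact hM t
    refine hb.trans ?_
    rw [integral_mul_const, integral_Ioc_eq_integral_Ioo, aux_exp_int a b β hab.le]
  -- assemble
  have ha := hlow μ hμ
  have hb' := hlow ν hν
  have hea : (0:ℝ) < Real.exp (β * a) := Real.exp_pos _
  have hlog := aux_log hea ha hb'
  calc |(1 / β) * Real.log (∫ x, Real.exp (β * x) ∂μ) -
        (1 / β) * Real.log (∫ x, Real.exp (β * x) ∂ν)|
      = (1 / β) * |Real.log (∫ x, Real.exp (β * x) ∂μ) -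
          Real.log (∫ x, Real.exp (β * x) ∂ν)| := by
        rw [← mul_sub, abs_mul, abs_of_pos (by positivity)]
    _ ≤ (1 / β) * (|(∫ x, Real.exp (β * x) ∂μ) - ∫ x, Real.exp (β * x) ∂ν| /
          Real.exp (β * a)) := by gcongr
    _ ≤ (1 / β) * (((Real.exp (β * b) - Real.exp (β * a)) * M) / Real.exp (β * a)) := by
        gcongr
    _ = ((Real.exp (β * (b - a)) - 1) / β) * M := by
        have hkey : (Real.exp (β * b) - Real.exp (β * a)) / Real.exp (β * a) =
            Real.exp (β * (b - a)) - 1 := by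
          rw [sub_div, div_self hea.ne', show β * (b - a) = β * b - β * a by ring,
            Real.exp_sub]
        calc (1 / β) * (((Real.exp (β * b) - Real.exp (β * a)) * M) / Real.exp (β * a))
            = (1 / β) * (((Real.exp (β * b) - Real.exp (β * a)) / Real.exp (β * a)) * M) := by
              ring
          _ = ((Real.exp (β * (b - a)) - 1) / β) * M := by rw [hkey]; ring
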